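/- Let κ be a regular uncountable cardinal and assume principle C⁻(κ). Then for every family 𝓐 of infinite subsets of ℕ with |𝓐| = κ, either (a) there is 𝓑 ⊆ 𝓐 with |𝓑| = κ such that B ∖ B' is infinite for all distinct B, B' ∈ 𝓑, or (b) there is an infinite X ⊆ ℕ such that both {A ∈ 𝓐 : A ⊆ X} and {A ∈ 𝓐 : X ⊆* A} have cardinality κ, where X ⊆* A means X ∖ A is finite. -/

import Mathlib

open Cardinal

/-- `C` is closed and unbounded (club) in the ordinal `o`. -/
def ClubIn (o : Ordinal) (C : Set Ordinal) : Prop :=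
  C ⊆ Set.Iio o ∧ (∀ α < o, ∃ β ∈ C, α < β) ∧
    ∀ α < o, 0 < α → (∀ β < α, ∃ γ ∈ C, β < γ ∧ γ < α) → α ∈ C

/-- `S` is a stationary subset of the ordinal `o`: it meets every club subset of `o`. -/
def StationaryIn (o : Ordinal) (S : Set Ordinal) : Prop :=
  S ⊆ Set.Iio o ∧ ∀ C, ClubIn o C → (S ∩ C).Nonempty

/-- `S` is a cofinal (unbounded) subset of the ordinal `o`. -/
def CofinalIn (o : Ordinal) (S : Set Ordinal) : Prop :=
  S ⊆ Set.Iio o ∧ ∀ α < o, ∃ β ∈ S, α < β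

/-- For a matrix `A` of subsets of `ℕ`, a finite sequence `t ∈ ω^{<ω}` and
`s : {0,…,|t|-1} → Ordinal`, this is `A[s,t] = ⋂_{i<|t|} A(s i, t i)`. -/
def MatInt (A : Ordinal → ℕ → Set ℕ) (t : List ℕ) (s : Fin t.length → Ordinal) : Set ℕ :=
  ⋂ i, A (s i) (t.get i)

/-- Principle C⁻(κ). -/
def PrincipleCminus (κ : Cardinal) : Prop :=
  ∀ (T : Set (List ℕ)) (A : Ordinal → ℕ → Set ℕ),
    (∃ S : Set Ordinal, CofinalIn κ.ord S ∧
      ∀ t ∈ T, ∀ s : Fin t.length → Ordinal, Function.Injective s →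
        (∀ i, s i ∈ S) → (MatInt A t s).Nonempty) ∨
    (∃ t ∈ T, ∃ D : Fin t.length → Set Ordinal,
      (∀ i, CofinalIn κ.ord (D i)) ∧
      ∀ s : Fin t.length → Ordinal, Function.Injective s →
        (∀ i, s i ∈ D i) → MatInt A t s = ∅)

theorem cofinal_card {κ : Cardinal.{0}} (hreg : κ.IsRegular) {S : Set Ordinal}
    (hS : CofinalIn κ.ord S) : #S = Cardinal.lift.{1} κ := by
  apply le_antisymm
  · calc #S ≤ #(Set.Iio κ.ord) := Cardinal.mk_le_mk_of_subset hS.1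
      _ = Cardinal.lift.{1} κ := by rw [Ordinal.mk_Iio_ordinal, Cardinal.card_ord]
  · set o := κ.ord with ho
    set e := (Ordinal.ToType.mk (o := o)) with he
    let g : S → o.ToType := fun x => e ⟨x.1, hS.1 x.2⟩
    have hginj : Function.Injective g := by
      intro x y hxy
      have := congrArg Subtype.val (e.injective hxy)
      exact Subtype.ext this
    have hub : Set.Unbounded (· < ·) (Set.range g) := by
      intro a
      obtain ⟨β, hβS, hβ⟩ := hS.2 (e.symm a).1 (e.symm a).2
      refine ⟨g ⟨β, hβS⟩, Set.mem_range_self _, ?_⟩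
      have h2 : a < g ⟨β, hβS⟩ := by
        have : e.symm a < (⟨β, hS.1 hβS⟩ : Set.Iio o) := Subtype.mk_lt_mk.mpr hβ
        have h3 := e.lt_iff_lt.mpr this
        rwa [OrderIso.apply_symm_apply] at h3
      exact not_lt_of_gt h2
    have hcof : Ordinal.cof o ≤ #(Set.range g) := by
      have hc : IsCofinal (Set.range g) := fun a => by
        obtain ⟨b, hb, hab⟩ := hub a
        exact ⟨b, hb, not_lt.mp hab⟩
      have := Order.cof_le hc
      rwa [Ordinal.cof_toType] at this
    have hco : Ordinal.cof o = κ := hreg.cof_eq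
    have hrange : Cardinal.lift.{1} #(Set.range g) = Cardinal.lift.{0} #S :=
      Cardinal.mk_range_eq_lift hginj
    calc Cardinal.lift.{1} κ = Cardinal.lift.{1} (Ordinal.cof o) := by rw [hco]
      _ ≤ Cardinal.lift.{1} #(Set.range g) := Cardinal.lift_le.mpr (hco ▸ hcof)
      _ = Cardinal.lift.{0} #S := hrange
      _ = #S := Cardinal.lift_id' _

def matOf (G : Ordinal → Set ℕ) : Ordinal → ℕ → Set ℕ :=
  fun α m => if m % 2 = 0 then G α else (G α ∪ Set.Iio (m / 2))ᶜ

def Tset : Set (List ℕ) := {t | ∃ n : ℕ, t = [2 * n, 2 * n + 1]}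

theorem pair_inj {α β : Ordinal} (h : α ≠ β) : Function.Injective ![α, β] := by
  intro i j hij
  fin_cases i <;> fin_cases j <;> simp_all

theorem matOf_even (G : Ordinal → Set ℕ) (n : ℕ) (α : Ordinal) :
    matOf G α (2 * n) = G α := by
  simp [matOf, Nat.mul_mod_right]

theorem matOf_odd (G : Ordinal → Set ℕ) (n : ℕ) (α : Ordinal) :
    matOf G α (2 * n + 1) = (G α ∪ Set.Iio n)ᶜ := by
  have e1 : ¬ (2 * n + 1) % 2 = 0 := by omega
  have e2 : (2 * n + 1) / 2 = n := by omega
  simp [matOf, e1, e2]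

theorem matInt_eval (G : Ordinal → Set ℕ) (n : ℕ) (α β : Ordinal) :
    MatInt (matOf G) [2 * n, 2 * n + 1] ![α, β] = G α \ (G β ∪ Set.Iio n) := by
  ext x
  simp only [MatInt, Set.mem_iInter, Set.mem_diff]
  constructor
  · intro h
    have h' : ∀ i : Fin 2, x ∈ matOf G (![α, β] i) ([2 * n, 2 * n + 1].get i) := h
    have h0 := h' 0
    have h1 := h' 1
    simp only [List.get, Matrix.cons_val_zero, Matrix.cons_val_one, Matrix.head_cons] at h0 h1
    rw [matOf_even] at h0
    rw [matOf_odd] at h1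
    exact ⟨h0, h1⟩
  · intro ⟨hx, hx'⟩
    have h' : ∀ i : Fin 2, x ∈ matOf G (![α, β] i) ([2 * n, 2 * n + 1].get i) := by
      intro i
      fin_cases i <;>
        simp only [List.get, Matrix.cons_val_zero, Matrix.cons_val_one, Matrix.head_cons]
      · rw [matOf_even]; exact hx
      · rw [matOf_odd]; exact hx'
    exact h'

theorem key {κ : Cardinal.{0}} (hC : PrincipleCminus κ) (G : Ordinal → Set ℕ) :
    (∃ S : Set Ordinal, CofinalIn κ.ord S ∧
      ∀ σ ∈ S, ∀ σ' ∈ S, σ ≠ σ' → (G σ \ G σ').Infinite) ∨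
    (∃ n : ℕ, ∃ D0 D1 : Set Ordinal, CofinalIn κ.ord D0 ∧ CofinalIn κ.ord D1 ∧
      ∀ α ∈ D0, ∀ β ∈ D1, α ≠ β → G α ⊆ G β ∪ Set.Iio n) := by
  rcases hC Tset (matOf G) with ⟨S, hS, hprop⟩ | ⟨t, ht, D, hD, hempty⟩
  · left
    refine ⟨S, hS, fun σ hσ σ' hσ' hne => ?_⟩
    by_contra hfin
    rw [Set.not_infinite] at hfin
    obtain ⟨N, hN⟩ := hfin.bddAbove
    have hmem : ∀ i : Fin ([2 * (N + 1), 2 * (N + 1) + 1] : List ℕ).length,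
        (![σ, σ'] : Fin 2 → Ordinal) i ∈ S := by
      intro i; fin_cases i <;> simpa
    obtain ⟨x, hx⟩ := hprop [2 * (N + 1), 2 * (N + 1) + 1] ⟨N + 1, rfl⟩
      ![σ, σ'] (pair_inj hne) hmem
    rw [matInt_eval] at hx
    obtain ⟨hx1, hx2⟩ := hx
    simp only [Set.mem_union, Set.mem_Iio, not_or, not_lt] at hx2
    have : x ∈ G σ \ G σ' := ⟨hx1, hx2.1⟩
    have := hN this
    omega
  · right
    obtain ⟨n, rfl⟩ := ht
    refine ⟨n, D ⟨0, by norm_num⟩, D ⟨1, by norm_num⟩, hD _, hD _,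
      fun α hα β hβ hne => ?_⟩
    have hmem : ∀ i : Fin ([2 * n, 2 * n + 1] : List ℕ).length,
        (![α, β] : Fin 2 → Ordinal) i ∈ D i := by
      intro i; fin_cases i <;> simpa
    have := hempty ![α, β] (pair_inj hne) hmem
    rw [matInt_eval] at this
    rw [Set.diff_eq_empty] at this
    exact this

theorem image_card {κ : Cardinal.{0}} (hreg : κ.IsRegular) {G : Ordinal → Set ℕ}
    (hinjOn : Set.InjOn G (Set.Iio κ.ord)) {S : Set Ordinal} (hS : CofinalIn κ.ord S) :
    #(G '' S) = κ := by
  have h1 := cofinal_card hreg hS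
  have h2 : Set.InjOn G S := hinjOn.mono hS.1
  have h3 := Cardinal.mk_image_eq_of_injOn_lift G S h2
  rw [h1, Cardinal.lift_id'] at h3
  exact Cardinal.lift_injective h3

theorem cofinal_diff {κ : Cardinal.{0}} {S : Set Ordinal} (hS : CofinalIn κ.ord S)
    {β0 : Ordinal} (hβ0 : β0 < κ.ord) : CofinalIn κ.ord (S \ {β0}) := by
  refine ⟨fun x hx => hS.1 hx.1, fun α hα => ?_⟩
  obtain ⟨β, hβS, hβ⟩ := hS.2 (max α β0) (max_lt hα hβ0)
  exact ⟨β, ⟨hβS, fun h => by simp at h; subst h; exact absurd hβ (by simp)⟩,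
    lt_of_le_of_lt (le_max_left _ _) hβ⟩

/-- Under C⁻(κ), any κ-sized family of infinite subsets of ℕ either has a κ-sized
subfamily with all pairwise differences infinite, or there is an infinite `X ⊆ ℕ`
with κ many members of the family below `X` and κ many members almost above `X`. -/
theorem statement_10 (κ : Cardinal.{0}) (hreg : κ.IsRegular) (hunc : ℵ₀ < κ)
    (hC : PrincipleCminus κ)
    (𝓐 : Set (Set ℕ)) (hinf : ∀ A ∈ 𝓐, A.Infinite) (hcard : #𝓐 = κ) :
    (∃ 𝓑 ⊆ 𝓐, #𝓑 = κ ∧ ∀ B ∈ 𝓑, ∀ B' ∈ 𝓑, B ≠ B' → (B \ B').Infinite) ∨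
    (∃ X : Set ℕ, X.Infinite ∧ #{A : Set ℕ | A ∈ 𝓐 ∧ A ⊆ X} = κ ∧
      #{A : Set ℕ | A ∈ 𝓐 ∧ (X \ A).Finite} = κ) := by
  -- enumeration of 𝓐 by ordinals below κ.ord
  have hIio : #(Set.Iio κ.ord) = Cardinal.lift.{1} κ := by
    rw [Ordinal.mk_Iio_ordinal, Cardinal.card_ord]
  obtain ⟨e⟩ : Nonempty (Set.Iio κ.ord ≃ ULift.{1} ↥𝓐) := by
    rw [← Cardinal.eq, hIio, Cardinal.mk_uLift, hcard]
  classical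
  set E : Ordinal → Set ℕ := fun α => if h : α < κ.ord then ((e ⟨α, h⟩).down : Set ℕ) else ∅
    with hE
  have hmem : ∀ {α : Ordinal}, α < κ.ord → E α ∈ 𝓐 := by
    intro α h
    simp only [hE, dif_pos h]
    exact (e ⟨α, h⟩).down.2
  have hEinj : Set.InjOn E (Set.Iio κ.ord) := by
    intro α hα β hβ hab
    have hα' : α < κ.ord := hα
    have hβ' : β < κ.ord := hβ
    simp only [hE, dif_pos hα', dif_pos hβ'] at hab
    have : e ⟨α, hα⟩ = e ⟨β, hβ⟩ := by
      apply ULift.down_injective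
      exact Subtype.ext hab
    have := e.injective this
    exact congrArg Subtype.val this
  -- counting lemma for subfamilies of 𝓐
  have hcount : ∀ (P : Set ℕ → Prop) (W : Set (Set ℕ)),
      W ⊆ {A : Set ℕ | A ∈ 𝓐 ∧ P A} → #W = κ → #{A : Set ℕ | A ∈ 𝓐 ∧ P A} = κ := by
    intro P W hsub hW
    apply le_antisymm
    · have : {A : Set ℕ | A ∈ 𝓐 ∧ P A} ⊆ 𝓐 := fun A hA => hA.1
      calc #{A : Set ℕ | A ∈ 𝓐 ∧ P A} ≤ #𝓐 := Cardinal.mk_le_mk_of_subset this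
        _ = κ := hcard
    · calc κ = #W := hW.symm
        _ ≤ _ := Cardinal.mk_le_mk_of_subset hsub
  have hpos : (0 : Ordinal) < κ.ord := by
    rw [← Cardinal.ord_zero]
    exact Cardinal.ord_lt_ord.mpr hreg.pos
  -- first application
  rcases key hC E with ⟨S, hS, hpair⟩ | ⟨n, D0, D1, hD0, hD1, hrel1⟩
  · -- case (a)
    left
    refine ⟨E '' S, ?_, image_card hreg hEinj hS, ?_⟩
    · rintro B ⟨σ, hσ, rfl⟩
      exact hmem (hS.1 hσ)
    · rintro B ⟨σ, hσ, rfl⟩ B' ⟨σ', hσ', rfl⟩ hne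
      exact hpair σ hσ σ' hσ' (fun h => hne (by rw [h]))
  · -- re-index inside D1 and apply again
    have hD1card : #(D1 : Set Ordinal) = Cardinal.lift.{1} κ := cofinal_card hreg hD1
    obtain ⟨e2⟩ : Nonempty (Set.Iio κ.ord ≃ ↥D1) := by
      rw [← Cardinal.eq, hIio, hD1card]
    set f : Ordinal → Ordinal := fun ξ => if h : ξ < κ.ord then (e2 ⟨ξ, h⟩ : Ordinal) else ξ
      with hf
    have hfD1 : ∀ {ξ : Ordinal}, ξ < κ.ord → f ξ ∈ D1 := by
      intro ξ h
      simp only [hf, dif_pos h]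
      exact (e2 ⟨ξ, h⟩).2
    have hfinj : Set.InjOn f (Set.Iio κ.ord) := by
      intro ξ hξ η hη hfe
      have hξ' : ξ < κ.ord := hξ
      have hη' : η < κ.ord := hη
      simp only [hf, dif_pos hξ', dif_pos hη'] at hfe
      have := e2.injective (Subtype.ext hfe)
      exact congrArg Subtype.val this
    set G2 : Ordinal → Set ℕ := fun ξ => E (f ξ) with hG2
    have hG2inj : Set.InjOn G2 (Set.Iio κ.ord) := by
      intro ξ hξ η hη hg2
      have h1 := hEinj (hD1.1 (hfD1 hξ)) (hD1.1 (hfD1 hη)) hg2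
      exact hfinj hξ hη h1
    have hG2mem : ∀ {ξ : Ordinal}, ξ < κ.ord → G2 ξ ∈ 𝓐 := fun h => hmem (hD1.1 (hfD1 h))
    rcases key hC G2 with ⟨S2, hS2, hpair2⟩ | ⟨m, F0, F1, hF0, hF1, hrel2⟩
    · left
      refine ⟨G2 '' S2, ?_, image_card hreg hG2inj hS2, ?_⟩
      · rintro B ⟨σ, hσ, rfl⟩
        exact hG2mem (hS2.1 hσ)
      · rintro B ⟨σ, hσ, rfl⟩ B' ⟨σ', hσ', rfl⟩ hne
        exact hpair2 σ hσ σ' hσ' (fun h => hne (by rw [h]))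
    · -- case (b)
      right
      obtain ⟨ξ0, hξ0F, _⟩ := hF0.2 0 hpos
      have hξ0 : ξ0 < κ.ord := hF0.1 hξ0F
      set β0 : Ordinal := f ξ0 with hβ0def
      have hβ0D1 : β0 ∈ D1 := hfD1 hξ0
      have hβ0lt : β0 < κ.ord := hD1.1 hβ0D1
      set X : Set ℕ := E β0 ∪ Set.Iio (max n m) with hX
      have hXinf : X.Infinite := (hinf _ (hmem hβ0lt)).mono Set.subset_union_left
      refine ⟨X, hXinf, ?_, ?_⟩
      · -- κ many A ∈ 𝓐 with A ⊆ X
        apply hcount _ (E '' (D0 \ {β0}))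
        · rintro B ⟨α, ⟨hαD0, hαne⟩, rfl⟩
          have hαlt : α < κ.ord := hD0.1 hαD0
          refine ⟨hmem hαlt, ?_⟩
          have h1 : E α ⊆ E β0 ∪ Set.Iio n := hrel1 α hαD0 β0 hβ0D1 (by simpa using hαne)
          refine h1.trans (Set.union_subset_union_right _ ?_)
          exact Set.Iio_subset_Iio (le_max_left n m)
        · exact image_card hreg hEinj (cofinal_diff hD0 hβ0lt)
      · -- κ many A ∈ 𝓐 with X \ A finite
        apply hcount _ (G2 '' (F1 \ {ξ0}))
        · rintro B ⟨η, ⟨hηF1, hηne⟩, rfl⟩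
          have hηlt : η < κ.ord := hF1.1 hηF1
          refine ⟨hG2mem hηlt, ?_⟩
          have hne : ξ0 ≠ η := fun h => hηne (Set.mem_singleton_iff.mpr h.symm)
          have h1 : G2 ξ0 ⊆ G2 η ∪ Set.Iio m := hrel2 ξ0 hξ0F η hηF1 hne
          apply Set.Finite.subset (Set.finite_Iio (max n m))
          intro x hx
          obtain ⟨hxX, hxA⟩ := hx
          rcases hxX with hx1 | hx2
          · rcases h1 hx1 with h | h
            · exact absurd h hxA
            · exact lt_of_lt_of_le h (le_max_right n m)
          · exact hx2
        · exact image_card hreg hG2inj (cofinal_diff hF1 hξ0)
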